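/- Let G : Z × Z → ℝ≥0 be a bounded nonnegative symmetric function satisfying the triangle inequality in the appropriate sense, and let T : M → M be an operator on bounded pseudometrics of the form T(d)(z,z') = G(z,z') + c·E_γ(z,z')[d], where 0 ≤ c < 1, γ(z,z') is a fixed probability coupling depending on (z,z'), and E_γ(z,z')[d] denotes the expectation of d under this coupling. Then T is a contraction with Lipschitz constant c in the sup-norm on bounded pseudometrics, and hence has a unique fixed point. -/

import Mathlib

open MeasureTheory ProbabilityTheory Filter

section Aux

variable {Z : Type*} [MeasurableSpace Z]

lemma aux_integrable {μ : Measure (Z × Z)} [IsProbabilityMeasure μ]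
    {f : Z × Z → ℝ} (hm : Measurable f) {C : ℝ} (hb : ∀ p, |f p| ≤ C) :
    Integrable f μ :=
  ⟨hm.aestronglyMeasurable,
    HasFiniteIntegral.of_bounded (C := C) (Filter.Eventually.of_forall fun p => hb p)⟩

lemma aux_int_bound {μ : Measure (Z × Z)} [IsProbabilityMeasure μ]
    {f : Z × Z → ℝ} {C : ℝ} (hb : ∀ p, |f p| ≤ C) :
    |∫ q, f q ∂μ| ≤ C := by
  have := norm_integral_le_of_norm_le_const (μ := μ) (f := f) (C := C)
    (Filter.Eventually.of_forall fun p => by simpa using hb p)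
  simpa using this

lemma aux_meas_int (κ : Kernel (Z × Z) (Z × Z)) [IsMarkovKernel κ]
    {f : Z × Z → ℝ} (hm : Measurable f) :
    Measurable fun p => ∫ q, f q ∂(κ p) := by
  have : StronglyMeasurable fun p => ∫ q, (fun (_ : Z × Z) q => f q) p q ∂(κ p) :=
    MeasureTheory.StronglyMeasurable.integral_kernel_prod_right
      (κ := κ) ((hm.comp measurable_snd).stronglyMeasurable)
  exact this.measurable

end Aux

/-- The operator `T(d)(z,z') = G(z,z') + c·E_{γ(z,z')}[d]`, with `0 ≤ c < 1`, `G` a bounded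
nonnegative symmetric function satisfying the triangle inequality, and `γ` a (Markov kernel
of) probability couplings, is a `c`-Lipschitz contraction in the sup-norm on bounded
measurable functions, and hence has a unique fixed point. -/
theorem stmt_6 {Z : Type*} [MeasurableSpace Z]
    (G : Z × Z → ℝ) (hGm : Measurable G) (hGb : ∃ C, ∀ p, |G p| ≤ C)
    (hGnn : ∀ p, 0 ≤ G p) (hGsymm : ∀ x y, G (x, y) = G (y, x))
    (hGtri : ∀ x y z, G (x, z) ≤ G (x, y) + G (y, z))
    (κ : Kernel (Z × Z) (Z × Z)) [IsMarkovKernel κ]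
    (c : ℝ) (hc0 : 0 ≤ c) (hc1 : c < 1)
    (T : (Z × Z → ℝ) → Z × Z → ℝ)
    (hT : ∀ d p, T d p = G p + c * ∫ q, d q ∂(κ p)) :
    (∀ d d' (K : ℝ), (Measurable d ∧ ∃ C, ∀ p, |d p| ≤ C) →
      (Measurable d' ∧ ∃ C, ∀ p, |d' p| ≤ C) →
      (∀ p, |d p - d' p| ≤ K) → ∀ p, |T d p - T d' p| ≤ c * K) ∧
    (∃! d : Z × Z → ℝ, (Measurable d ∧ ∃ C, ∀ p, |d p| ≤ C) ∧ T d = d) := by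
  -- Part 1: contraction
  have contr : ∀ d d' (K : ℝ), (Measurable d ∧ ∃ C, ∀ p, |d p| ≤ C) →
      (Measurable d' ∧ ∃ C, ∀ p, |d' p| ≤ C) →
      (∀ p, |d p - d' p| ≤ K) → ∀ p, |T d p - T d' p| ≤ c * K := by
    rintro d d' K ⟨hdm, Cd, hdb⟩ ⟨hd'm, Cd', hd'b⟩ hK p
    have hint : Integrable d (κ p) := aux_integrable hdm hdb
    have hint' : Integrable d' (κ p) := aux_integrable hd'm hd'b
    have : T d p - T d' p = c * ∫ q, (d q - d' q) ∂(κ p) := by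
      rw [hT, hT, integral_sub hint hint']; ring
    rw [this, abs_mul, abs_of_nonneg hc0]
    exact mul_le_mul_of_nonneg_left (aux_int_bound hK) hc0
  refine ⟨contr, ?_⟩
  obtain ⟨C0, hC0⟩ := hGb
  set C : ℝ := max C0 0 with hCdef
  have hC : ∀ p, |G p| ≤ C := fun p => (hC0 p).trans (le_max_left _ _)
  have hCnn : 0 ≤ C := le_max_right _ _
  -- iterates
  set F : ℕ → Z × Z → ℝ :=
    fun n => Nat.rec G (fun _ f => fun p => ∫ q, f q ∂(κ p)) n with hF
  have hF0 : F 0 = G := rfl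
  have hFsucc : ∀ n p, F (n + 1) p = ∫ q, F n q ∂(κ p) := fun n p => rfl
  have hFm : ∀ n, Measurable (F n) := by
    intro n; induction n with
    | zero => exact hGm
    | succ n ih => exact aux_meas_int κ ih
  have hFb : ∀ n p, |F n p| ≤ C := by
    intro n; induction n with
    | zero => exact hC
    | succ n ih => intro p; rw [hFsucc]; exact aux_int_bound ih
  -- the candidate fixed point
  set d : Z × Z → ℝ := fun p => ∑' n, c ^ n * F n p with hd
  have hgeo : Summable fun n : ℕ => c ^ n * C :=
    (summable_geometric_of_lt_one hc0 hc1).mul_right C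
  have hsumm : ∀ p, Summable fun n : ℕ => c ^ n * F n p := by
    intro p
    refine Summable.of_norm_bounded hgeo fun n => ?_
    rw [Real.norm_eq_abs, abs_mul, abs_of_nonneg (pow_nonneg hc0 n)]
    exact mul_le_mul_of_nonneg_left (hFb n p) (pow_nonneg hc0 n)
  have hdb : ∀ p, |d p| ≤ C / (1 - c) := by
    intro p
    have h1 : |d p| ≤ ∑' n, c ^ n * C := by
      calc |d p| ≤ ∑' n, ‖c ^ n * F n p‖ :=
            norm_tsum_le_tsum_norm ((hsumm p).abs.congr fun n => (Real.norm_eq_abs _).symm)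
        _ ≤ ∑' n, c ^ n * C := by
            refine Summable.tsum_le_tsum (fun n => ?_)
              (((hsumm p).abs.congr fun n => (Real.norm_eq_abs _).symm)) hgeo
            rw [Real.norm_eq_abs, abs_mul, abs_of_nonneg (pow_nonneg hc0 n)]
            exact mul_le_mul_of_nonneg_left (hFb n p) (pow_nonneg hc0 n)
    have h2 : ∑' n : ℕ, c ^ n * C = C / (1 - c) := by
      rw [tsum_mul_right, tsum_geometric_of_lt_one hc0 hc1]
      ring
    rw [← h2]; exact h1
  have hdm : Measurable d := by
    refine measurable_of_tendsto_metrizable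
      (f := fun N => fun p => ∑ n ∈ Finset.range N, c ^ n * F n p) (fun N => ?_) ?_
    · exact Finset.measurable_sum _ fun n _ => ((hFm n).const_mul _)
    · rw [tendsto_pi_nhds]
      intro p
      exact (hsumm p).hasSum.tendsto_sum_nat
  -- T d = d
  have hfix : T d = d := by
    funext p
    have hintn : ∀ n : ℕ, Integrable (fun q => c ^ n * F n q) (κ p) := fun n =>
      (aux_integrable (hFm n) (hFb n)).const_mul _
    have hswap : ∫ q, d q ∂(κ p) = ∑' n : ℕ, ∫ q, c ^ n * F n q ∂(κ p) := by
      refine (integral_tsum_of_summable_integral_norm hintn ?_).symm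
      refine Summable.of_nonneg_of_le
        (fun n => integral_nonneg fun q => norm_nonneg _) (fun n => ?_) hgeo
      have : ∀ q, ‖c ^ n * F n q‖ ≤ c ^ n * C := by
        intro q
        rw [Real.norm_eq_abs, abs_mul, abs_of_nonneg (pow_nonneg hc0 n)]
        exact mul_le_mul_of_nonneg_left (hFb n q) (pow_nonneg hc0 n)
      calc ∫ q, ‖c ^ n * F n q‖ ∂(κ p) ≤ ∫ _, c ^ n * C ∂(κ p) :=
            integral_mono ((hintn n).norm) (integrable_const _)
              (fun q => this q)
        _ = c ^ n * C := by simp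
    have hsum1 : ∑' n : ℕ, ∫ q, c ^ n * F n q ∂(κ p) = ∑' n : ℕ, c ^ n * F (n + 1) p := by
      refine tsum_congr fun n => ?_
      rw [integral_const_mul, hFsucc]
    rw [hT, hswap, hsum1]
    have : c * ∑' n : ℕ, c ^ n * F (n + 1) p = ∑' n : ℕ, c ^ (n + 1) * F (n + 1) p := by
      rw [← tsum_mul_left]
      refine tsum_congr fun n => ?_
      ring
    rw [this]
    have hsumm' : Summable fun n : ℕ => c ^ (n + 1) * F (n + 1) p :=
      ((hsumm p).comp_injective (add_left_injective 1)).congr (fun n => rfl)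
    have := Summable.tsum_eq_zero_add (hsumm p)
    simp only [pow_zero, one_mul, hF0] at this
    simp only [hd]
    rw [this]
  refine ⟨d, ⟨⟨hdm, ⟨C / (1 - c), hdb⟩⟩, hfix⟩, ?_⟩
  -- uniqueness
  rintro d' ⟨⟨hd'm, Cd', hd'b⟩, hfix'⟩
  have key : ∀ n p, |d' p - d p| ≤ c ^ n * (Cd' + C / (1 - c)) := by
    intro n; induction n with
    | zero =>
      intro p
      rw [pow_zero, one_mul]
      calc |d' p - d p| ≤ |d' p| + |d p| := abs_sub _ _
        _ ≤ Cd' + C / (1 - c) := add_le_add (hd'b p) (hdb p)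
    | succ n ih =>
      intro p
      have := contr d' d (c ^ n * (Cd' + C / (1 - c)))
        ⟨hd'm, Cd', hd'b⟩ ⟨hdm, ⟨C / (1 - c), hdb⟩⟩ ih p
      rw [hfix', hfix] at this
      calc |d' p - d p| ≤ c * (c ^ n * (Cd' + C / (1 - c))) := this
        _ = c ^ (n + 1) * (Cd' + C / (1 - c)) := by ring
  funext p
  have hlim : Filter.Tendsto (fun n : ℕ => c ^ n * (Cd' + C / (1 - c))) Filter.atTop (nhds 0) := by
    simpa using (tendsto_pow_atTop_nhds_zero_of_lt_one hc0 hc1).mul_const (Cd' + C / (1 - c))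
  have h0 : |d' p - d p| ≤ 0 :=
    le_of_tendsto_of_tendsto' tendsto_const_nhds hlim (fun n => key n p)
  have : d' p - d p = 0 := abs_eq_zero.mp (le_antisymm h0 (abs_nonneg _))
  linarith
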